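/- Let f₀ : ℕ → ℕ be a sequence of nonnegative integers. For every n ≥ 1, the sum over all compositions c = (j₁, …, j_k) of n (i.e., all lists of positive integers with j₁ + ⋯ + j_k = n) of the product f₀(j₁)·f₀(j₂)⋯f₀(j_k) equals (𝒴f₀)(n), the n-th term of the invert transform of f₀. (Combinatorially, this sum counts the words of length n obtained by concatenating, for each j, blocks chosen from a fixed set of f₀(j) blocks of length j.) -/

import Mathlib

/-- The invert transform of a sequence `x : ℕ → ℚ` (indexed from 1, `x 0` ignored):
`(𝒴x)(0) = 0` and `(𝒴x)(n) = x n + ∑_{j=1}^{n-1} x j * (𝒴x)(n-j)` for `n ≥ 1`. -/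
def invert (x : ℕ → ℚ) : ℕ → ℚ
  | 0 => 0
  | n + 1 => x (n + 1) + ∑ j ∈ Finset.range n, x (j + 1) * invert x (n - j)
  termination_by n => n
  decreasing_by omega

/-- The partial Bell polynomial `B_{n,k}(z₁, z₂, …)`, evaluated at a sequence of rationals
`z` (indexed from 1, `z 0` ignored): the sum over all finitely supported `α : ℕ → ℕ` with
`α 0 = 0`, `∑ i, α i = k` and `∑ i, i * α i = n` of `(n! / ∏ i, (α i)!) * ∏ i (z i / i!)^(α i)`. -/
def partialBell (n k : ℕ) (z : ℕ → ℚ) : ℚ :=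
  ∑ α ∈ ((Finset.range (n + 1)).finsuppAntidiag k).filter
      (fun α => (∑ i ∈ Finset.range (n + 1), i * α i) = n ∧ α 0 = 0),
    ((n.factorial : ℚ) / ∏ i ∈ Finset.range (n + 1), ((α i).factorial : ℚ)) *
      ∏ i ∈ Finset.range (n + 1), (z i / (i.factorial : ℚ)) ^ α i


lemma comp_zero_blocks (c : Composition 0) : c.blocks = [] := by
  have hs := c.blocks_sum
  cases h : c.blocks with
  | nil => rfl
  | cons a l =>
    have ha := c.blocks_pos (h ▸ (List.mem_cons_self : a ∈ a :: l))
    rw [h, List.sum_cons] at hs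
    omega

lemma comp_blocks_ne_nil {n : ℕ} (c : Composition (n + 1)) : c.blocks ≠ [] := by
  intro h
  have := c.blocks_sum
  rw [h] at this
  simp at this

/-- Split a composition of `n+1` into its first block and the rest. -/
def splitComp (n : ℕ) : Composition (n + 1) ≃ Σ j : Fin (n + 1), Composition (n - j) where
  toFun c := by
    refine ⟨⟨c.blocks.headI - 1, ?_⟩, ⟨c.blocks.tail, ?_, ?_⟩⟩
    · obtain ⟨a, l, h⟩ := List.exists_cons_of_ne_nil (comp_blocks_ne_nil c)
      have ha := c.blocks_pos (h ▸ (List.mem_cons_self : a ∈ a :: l))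
      have hs := c.blocks_sum
      rw [h, List.sum_cons] at hs
      rw [h, List.headI_cons]
      omega
    · intro i hi
      exact c.blocks_pos (List.mem_of_mem_tail hi)
    · obtain ⟨a, l, h⟩ := List.exists_cons_of_ne_nil (comp_blocks_ne_nil c)
      have ha := c.blocks_pos (h ▸ (List.mem_cons_self : a ∈ a :: l))
      have hs := c.blocks_sum
      rw [h, List.sum_cons] at hs
      simp only [Fin.val_mk]
      rw [h, List.tail_cons, List.headI_cons]
      omega
  invFun jc := ⟨(jc.1 + 1) :: jc.2.blocks, by
      intro i hi
      rcases List.mem_cons.1 hi with h | h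
      · omega
      · exact jc.2.blocks_pos h, by
      have := jc.2.blocks_sum
      have := jc.1.2
      simp only [List.sum_cons, this]
      omega⟩
  left_inv c := by
    obtain ⟨a, l, h⟩ := List.exists_cons_of_ne_nil (comp_blocks_ne_nil c)
    have ha := c.blocks_pos (h ▸ (List.mem_cons_self : a ∈ a :: l))
    apply Composition.ext
    simp only [h, List.headI_cons, List.tail_cons]
    congr 1
    omega
  right_inv jc := by
    rcases jc with ⟨j, c⟩
    simp only [List.headI_cons, List.tail_cons, Nat.add_sub_cancel]
    rfl

lemma comp_sum_zero (x : ℕ → ℚ) :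
    ∑ c : Composition 0, (c.blocks.map x).prod = 1 := by
  have h : ∀ c : Composition 0, (c.blocks.map x).prod = 1 := fun c => by
    rw [comp_zero_blocks c]; rfl
  rw [Finset.sum_congr rfl (fun c _ => h c), Finset.sum_const, Finset.card_univ,
    composition_card]
  norm_num

lemma key (x : ℕ → ℚ) (n : ℕ) (hn : 1 ≤ n) :
    ∑ c : Composition n, (c.blocks.map x).prod = invert x n := by
  induction n using Nat.strong_induction_on with
  | _ n IH =>
    obtain ⟨m, rfl⟩ : ∃ m, n = m + 1 := ⟨n - 1, by omega⟩
    have step : ∑ c : Composition (m + 1), (c.blocks.map x).prod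
        = ∑ j : Fin (m + 1), x (j + 1) *
            ∑ c : Composition (m - j), (c.blocks.map x).prod := by
      rw [Fintype.sum_equiv (splitComp m)
        (fun c => (c.blocks.map x).prod)
        (fun jc => x (jc.1 + 1) * (jc.2.blocks.map x).prod)]
      · rw [← Finset.univ_sigma_univ, Finset.sum_sigma]
        simp [Finset.mul_sum]
      · intro c
        obtain ⟨a, l, h⟩ := List.exists_cons_of_ne_nil (comp_blocks_ne_nil c)
        have ha := c.blocks_pos (h ▸ (List.mem_cons_self : a ∈ a :: l))
        simp only [splitComp, Equiv.coe_fn_mk, h, List.headI_cons, List.tail_cons,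
          List.map_cons, List.prod_cons]
        congr 2
        omega
    rw [step, Fin.sum_univ_eq_sum_range
      (fun j => x (j + 1) * ∑ c : Composition (m - j), (c.blocks.map x).prod),
      Finset.sum_range_succ, Nat.sub_self, comp_sum_zero, mul_one]
    conv_rhs => rw [invert]
    rw [add_comm]
    congr 1
    apply Finset.sum_congr rfl
    intro j hj
    rw [Finset.mem_range] at hj
    rw [IH (m - j) (by omega) (by omega)]

/-- For `f₀ : ℕ → ℕ` and `n ≥ 1`, the sum over all compositions `(j₁, …, j_k)` of `n`
of the products `f₀ j₁ ⋯ f₀ j_k` equals the `n`-th term of the invert transform of `f₀`. -/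
theorem stmt_4 (f₀ : ℕ → ℕ) (n : ℕ) (hn : 1 ≤ n) :
    ∑ c : Composition n, (c.blocks.map fun j => (f₀ j : ℚ)).prod
      = invert (fun j => (f₀ j : ℚ)) n := by
  exact key (fun j => (f₀ j : ℚ)) n hn
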